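/- Let P_1, P_2 ∈ ℤ[y] be nonzero polynomials with no common divisor in ℚ[y], satisfying: no prime p divides both P_1(m) and P_2(m) for all m ∈ ℤ. Then there exist infinitely many m ∈ ℤ such that gcd(P_1(m), P_2(m)) = 1. -/

import Mathlib

open Polynomial

private lemma crt_aux (s : Finset ℕ) (hs : ∀ p ∈ s, p.Prime) (f : ℕ → ℤ) :
    ∃ m : ℤ, ∀ p ∈ s, (p : ℤ) ∣ (m - f p) := by
  classical
  induction s using Finset.induction_on with
  | empty => exact ⟨0, by simp⟩
  | @insert q s hq ih =>
    obtain ⟨m, hm⟩ := ih (fun p hp => hs p (Finset.mem_insert_of_mem hp))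
    have hqp : q.Prime := hs q (Finset.mem_insert_self _ _)
    set N : ℤ := ∏ p ∈ s, (p : ℤ) with hN
    have hco : IsCoprime N ((q : ℕ) : ℤ) := by
      apply IsCoprime.prod_left
      intro p hp
      rw [Int.isCoprime_iff_gcd_eq_one, Int.gcd_natCast_natCast]
      exact (Nat.coprime_primes (hs p (Finset.mem_insert_of_mem hp)) hqp).mpr
        (fun h => hq (h ▸ hp))
    obtain ⟨u, v, huv⟩ := hco
    refine ⟨m + N * ((f q - m) * u), fun p hp => ?_⟩
    rcases Finset.mem_insert.mp hp with rfl | hp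
    · exact ⟨(m - f p) * v, by linear_combination (f p - m) * huv⟩
    · have h1 : (p : ℤ) ∣ N := Finset.dvd_prod_of_mem (fun p : ℕ => (p : ℤ)) hp
      have h2 := hm p hp
      have : m + N * ((f q - m) * u) - f p = (m - f p) + N * ((f q - m) * u) := by ring
      rw [this]
      exact dvd_add h2 (h1.mul_right _)

theorem stmt_15 (P₁ P₂ : Polynomial ℤ) (h1 : P₁ ≠ 0) (h2 : P₂ ≠ 0)
    (hcop : ∀ d : Polynomial ℚ,
      d ∣ P₁.map (algebraMap ℤ ℚ) → d ∣ P₂.map (algebraMap ℤ ℚ) → IsUnit d)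
    (hAV2 : ∀ p : ℤ, Prime p → ∃ m : ℤ, ¬ p ∣ P₁.eval m ∨ ¬ p ∣ P₂.eval m) :
    {m : ℤ | Int.gcd (P₁.eval m) (P₂.eval m) = 1}.Infinite := by
  classical
  have hinj : Function.Injective (algebraMap ℤ ℚ) := fun x y h => by exact_mod_cast h
  -- Bezout identity over ℚ
  have hc : IsCoprime (P₁.map (algebraMap ℤ ℚ)) (P₂.map (algebraMap ℤ ℚ)) := by
    rw [← EuclideanDomain.gcd_isUnit_iff]
    exact hcop _ (EuclideanDomain.gcd_dvd_left _ _) (EuclideanDomain.gcd_dvd_right _ _)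
  obtain ⟨a, b, hab⟩ := hc
  obtain ⟨c₁, hc₁⟩ := IsLocalization.integerNormalization_map_to_map (nonZeroDivisors ℤ) a
  obtain ⟨c₂, hc₂⟩ := IsLocalization.integerNormalization_map_to_map (nonZeroDivisors ℤ) b
  set A : Polynomial ℤ := IsLocalization.integerNormalization (nonZeroDivisors ℤ) a with hA
  set B : Polynomial ℤ := IsLocalization.integerNormalization (nonZeroDivisors ℤ) b with hB
  have hc₁' : A.map (algebraMap ℤ ℚ) = C (((c₁ : ℤ) : ℚ)) * a := by
    rw [hc₁, ← algebraMap_smul ℚ (c₁ : ℤ) a, smul_eq_C_mul]; norm_num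
  have hc₂' : B.map (algebraMap ℤ ℚ) = C (((c₂ : ℤ) : ℚ)) * b := by
    rw [hc₂, ← algebraMap_smul ℚ (c₂ : ℤ) b, smul_eq_C_mul]; norm_num
  set δ : ℤ := (c₁ : ℤ) * (c₂ : ℤ) with hδdef
  have hδ : δ ≠ 0 := mul_ne_zero (nonZeroDivisors.coe_ne_zero c₁) (nonZeroDivisors.coe_ne_zero c₂)
  have key : (C ((c₂ : ℤ)) * A) * P₁ + (C ((c₁ : ℤ)) * B) * P₂ = C δ := by
    apply map_injective (algebraMap ℤ ℚ) hinj
    rw [Polynomial.map_add, Polynomial.map_mul, Polynomial.map_mul, Polynomial.map_mul,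
      Polynomial.map_mul, hc₁', hc₂', map_C, map_C, map_C]
    simp only [algebraMap_int_eq, eq_intCast] at hab ⊢
    rw [hδdef]
    push_cast
    rw [C_mul]
    linear_combination (C ((c₁ : ℤ) : ℚ) * C ((c₂ : ℤ) : ℚ)) * hab
  -- gcd divides δ everywhere
  have hgdvd : ∀ m : ℤ, ((Int.gcd (P₁.eval m) (P₂.eval m)) : ℤ) ∣ δ := by
    intro m
    have := congrArg (Polynomial.eval m) key
    simp only [eval_add, eval_mul, eval_C] at this
    rw [← this]
    exact dvd_add ((Int.gcd_dvd_left _ _).mul_left _) ((Int.gcd_dvd_right _ _).mul_left _)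
  -- choose witnesses for each prime
  choose! mfun hmfun using fun (p : ℕ) (hp : p.Prime) => hAV2 (p : ℤ) (Nat.prime_iff_prime_int.mp hp)
  obtain ⟨m₀, hm₀⟩ := crt_aux δ.natAbs.primeFactors
    (fun p hp => Nat.prime_of_mem_primeFactors hp) mfun
  refine Set.infinite_of_injective_forall_mem (f := fun k : ℤ => m₀ + δ * k) ?_ ?_
  · intro x y hxy
    simpa [hδ] using hxy
  · intro k
    simp only [Set.mem_setOf_eq]
    by_contra hne
    set m' : ℤ := m₀ + δ * k with hm'
    obtain ⟨q, hq, hqg⟩ := Nat.exists_prime_and_dvd hne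
    have hq1 : (q : ℤ) ∣ P₁.eval m' :=
      dvd_trans (Int.natCast_dvd_natCast.mpr hqg) (Int.gcd_dvd_left _ _)
    have hq2 : (q : ℤ) ∣ P₂.eval m' :=
      dvd_trans (Int.natCast_dvd_natCast.mpr hqg) (Int.gcd_dvd_right _ _)
    have hqδ : (q : ℤ) ∣ δ :=
      dvd_trans (Int.natCast_dvd_natCast.mpr hqg) (hgdvd m')
    have hqS : q ∈ δ.natAbs.primeFactors := by
      rw [Nat.mem_primeFactors]
      exact ⟨hq, Int.natAbs_dvd_natAbs.mpr (by simpa using hqδ), by simpa using hδ⟩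
    have hmod : (q : ℤ) ∣ m' - mfun q := by
      have h1 := hm₀ q hqS
      have : m' - mfun q = (m₀ - mfun q) + δ * k := by rw [hm']; ring
      rw [this]
      exact dvd_add h1 (hqδ.mul_right _)
    have he1 : (q : ℤ) ∣ P₁.eval (mfun q) := by
      have h := hmod.trans (sub_dvd_eval_sub m' (mfun q) P₁)
      simpa using hq1.sub h
    have he2 : (q : ℤ) ∣ P₂.eval (mfun q) := by
      have h := hmod.trans (sub_dvd_eval_sub m' (mfun q) P₂)
      simpa using hq2.sub h
    rcases hmfun q hq with h | h
    · exact h he1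
    · exact h he2
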